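/- If g : ℕ+ → ℤ and h is its invert transform, and c (resp. d) denotes the k-fold convolution array built from g (resp. h), then for all 1 ≤ k ≤ n, d(n,k) = Σ_{i=k}^{n} C(i-1, k-1) · c(n,i). -/

import Mathlib

/-- The invert transform: `invT g n = g n + ∑_{j=1}^{n-1} g j * invT g (n-j)`. -/
def invT (g : ℕ → ℤ) : ℕ → ℤ
  | n => g n + ∑ j ∈ (Finset.Ico 1 n).attach, g j.1 * invT g (n - j.1)
decreasing_by
  have h := Finset.mem_Ico.mp j.2
  omega

/-- Compositions of `n` into `k` positive parts. -/
def comps (k n : ℕ) : Finset (Fin k → ℕ) :=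
  (Finset.Nat.antidiagonalTuple k n).filter fun f => ∀ i, 0 < f i

/-- The `k`-fold convolution array of `g`:
sum over compositions of `n` into `k` positive parts of the products of values of `g`. -/
def compArr (g : ℕ → ℤ) (n k : ℕ) : ℤ :=
  ∑ f ∈ comps k n, ∏ i, g (f i)

lemma invT_eq (g : ℕ → ℤ) (n : ℕ) :
    invT g n = g n + ∑ j ∈ Finset.Ico 1 n, g j * invT g (n - j) := by
  rw [invT]
  congr 1
  exact Finset.sum_attach (Finset.Ico 1 n) (fun j => g j * invT g (n - j))

lemma mem_comps {k n : ℕ} {f : Fin k → ℕ} :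
    f ∈ comps k n ↔ (∑ i, f i) = n ∧ ∀ i, 0 < f i := by
  simp [comps, Finset.Nat.mem_antidiagonalTuple]

lemma compArr_zero (u : ℕ → ℤ) (n : ℕ) : compArr u n 0 = if n = 0 then 1 else 0 := by
  rcases n with _ | n
  · rw [compArr]
    have : comps 0 0 = {![]} := by
      ext f
      simp [mem_comps]
      funext i; exact i.elim0
    simp [this]
  · rw [compArr]
    have : comps 0 (n+1) = ∅ := by
      ext f; simp [mem_comps]
    simp [this]

lemma compArr_eq_zero (u : ℕ → ℤ) {n k : ℕ} (h : n < k) : compArr u n k = 0 := by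
  rw [compArr]
  have : comps k n = ∅ := by
    ext f
    simp only [mem_comps, Finset.notMem_empty, iff_false, not_and]
    intro hsum hpos
    have : (Finset.univ : Finset (Fin k)).card • 1 ≤ ∑ i, f i :=
      Finset.card_nsmul_le_sum _ _ _ (fun i _ => hpos i)
    simp at this
    omega
  simp [this]

lemma compArr_succ (u : ℕ → ℤ) (n k : ℕ) :
    compArr u n (k + 1) = ∑ j ∈ Finset.Icc 1 n, u j * compArr u (n - j) k := by
  have hr : (∑ j ∈ Finset.Icc 1 n, u j * compArr u (n - j) k)
      = ∑ p ∈ (Finset.Icc 1 n).sigma (fun j => comps k (n - j)), u p.1 * ∏ i, u (p.2 i) := by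
    rw [Finset.sum_sigma]
    exact Finset.sum_congr rfl fun j _ => by rw [compArr, Finset.mul_sum]
  rw [hr, compArr]
  refine Finset.sum_nbij' (fun f => ⟨f 0, Fin.tail f⟩) (fun p => Fin.cons p.1 p.2) ?_ ?_ ?_ ?_ ?_
  · intro f hf
    rw [mem_comps] at hf
    obtain ⟨hsum, hpos⟩ := hf
    have h0 : f 0 ≤ n := hsum ▸ Finset.single_le_sum (f := fun i => f i) (fun i _ => Nat.zero_le _) (Finset.mem_univ 0)
    have htail : (∑ i, Fin.tail f i) = n - f 0 := by
      have h1 := Fin.sum_univ_succ f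
      rw [hsum] at h1
      have h2 : (∑ i, Fin.tail f i) = ∑ i : Fin k, f i.succ := rfl
      omega
    simp only [Finset.mem_sigma, Finset.mem_Icc, mem_comps]
    exact ⟨⟨hpos 0, h0⟩, htail, fun i => hpos i.succ⟩
  · rintro ⟨j, f'⟩ hp
    simp only [Finset.mem_sigma, Finset.mem_Icc, mem_comps] at hp
    obtain ⟨⟨hj1, hjn⟩, hsum, hpos⟩ := hp
    rw [mem_comps]
    constructor
    · rw [Fin.sum_univ_succ]
      simp only [Fin.cons_zero, Fin.cons_succ]
      rw [hsum]; omega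
    · intro i
      refine Fin.cases ?_ ?_ i
      · exact hj1
      · intro i'; simpa using hpos i'
  · intro f _; exact Fin.cons_self_tail f
  · rintro ⟨j, f'⟩ _
    simp [Fin.tail_cons]
  · intro f _
    rw [Fin.prod_univ_succ]
    rfl

/-- Target array. -/
def Tarr (g : ℕ → ℤ) (n k : ℕ) : ℤ :=
  if k = 0 then (if n = 0 then 1 else 0)
  else ∑ i ∈ Finset.Icc k n, ((i - 1).choose (k - 1) : ℤ) * compArr g n i

lemma star (g : ℕ → ℤ) (k m : ℕ) :
    ∑ i ∈ Finset.Icc k m, (i.choose k : ℤ) * compArr g m i = Tarr g m k + Tarr g m (k + 1) := by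
  rcases k with _ | s
  · rw [Tarr, Tarr]
    simp only [if_pos rfl, if_neg (Nat.one_ne_zero)]
    have h0 : Finset.Icc 0 m = insert 0 (Finset.Icc 1 m) := by
      ext x; simp; omega
    rw [h0, Finset.sum_insert (by simp)]
    rw [compArr_zero]
    simp only [Nat.choose_zero_right, Nat.cast_one, one_mul]
    congr 1
    refine Finset.sum_congr rfl fun i hi => ?_
    simp
  · rw [Tarr, Tarr]
    simp only [if_neg (Nat.succ_ne_zero _), Nat.add_sub_cancel]
    have h2 : ∑ i ∈ Finset.Icc (s + 2) m, ((i - 1).choose (s + 1) : ℤ) * compArr g m i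
        = ∑ i ∈ Finset.Icc (s + 1) m, ((i - 1).choose (s + 1) : ℤ) * compArr g m i := by
      refine Finset.sum_subset ?_ ?_
      · exact Finset.Icc_subset_Icc (Nat.le_succ _) le_rfl
      · intro x hx hx2
        simp only [Finset.mem_Icc] at hx hx2
        have : x = s + 1 := by omega
        subst this
        simp [Nat.choose_eq_zero_of_lt]
    rw [h2, ← Finset.sum_add_distrib]
    refine Finset.sum_congr rfl fun i hi => ?_
    simp only [Finset.mem_Icc] at hi
    obtain ⟨t, rfl⟩ : ∃ t, i = t + 1 := ⟨i - 1, by omega⟩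
    simp only [Nat.add_sub_cancel, Nat.choose_succ_succ, Nat.cast_add]
    ring

lemma key (g : ℕ → ℤ) (n k : ℕ) :
    compArr (invT g) n (k + 1) =
      ∑ j ∈ Finset.Icc 1 n, g j *
        (compArr (invT g) (n - j) k + compArr (invT g) (n - j) (k + 1)) := by
  rw [compArr_succ]
  have hexp : ∀ j, invT g j * compArr (invT g) (n - j) k
      = g j * compArr (invT g) (n - j) k
        + ∑ l ∈ Finset.Ico 1 j, g l * (invT g (j - l) * compArr (invT g) (n - j) k) := by
    intro j
    rw [invT_eq, add_mul, Finset.sum_mul]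
    congr 1
    exact Finset.sum_congr rfl fun l _ => by ring
  simp only [hexp]
  rw [Finset.sum_add_distrib]
  have hds : ∑ j ∈ Finset.Icc 1 n, ∑ l ∈ Finset.Ico 1 j,
        g l * (invT g (j - l) * compArr (invT g) (n - j) k)
      = ∑ l ∈ Finset.Icc 1 n, g l * compArr (invT g) (n - l) (k + 1) := by
    have hrhs : ∀ l, g l * compArr (invT g) (n - l) (k + 1)
        = ∑ m ∈ Finset.Icc 1 (n - l), g l * (invT g m * compArr (invT g) (n - l - m) k) := by
      intro l
      rw [compArr_succ, Finset.mul_sum]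
    simp only [hrhs]
    rw [Finset.sum_sigma', Finset.sum_sigma']
    refine Finset.sum_nbij' (fun p => ⟨p.2, p.1 - p.2⟩) (fun p => ⟨p.1 + p.2, p.1⟩) ?_ ?_ ?_ ?_ ?_
    · rintro ⟨j, l⟩ hp
      simp only [Finset.mem_sigma, Finset.mem_Icc, Finset.mem_Ico] at hp
      simp only [Finset.mem_sigma, Finset.mem_Icc]
      omega
    · rintro ⟨l, m⟩ hp
      simp only [Finset.mem_sigma, Finset.mem_Icc] at hp
      simp only [Finset.mem_sigma, Finset.mem_Icc, Finset.mem_Ico]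
      omega
    · rintro ⟨j, l⟩ hp
      simp only [Finset.mem_sigma, Finset.mem_Icc, Finset.mem_Ico] at hp
      have h1 : l + (j - l) = j := by omega
      simp [h1]
    · rintro ⟨l, m⟩ hp
      simp only [Finset.mem_sigma, Finset.mem_Icc] at hp
      have h1 : l + m - l = m := by omega
      simp [h1]
    · rintro ⟨j, l⟩ hp
      simp only [Finset.mem_sigma, Finset.mem_Icc, Finset.mem_Ico] at hp
      have h1 : n - (l + (j - l)) = n - j := by omega
      have h2 : n - l - (j - l) = n - j := by omega
      rw [h2]
  rw [hds, ← Finset.sum_add_distrib]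
  exact Finset.sum_congr rfl fun j _ => by ring

lemma main (g : ℕ → ℤ) : ∀ n k, compArr (invT g) n k = Tarr g n k := by
  intro n
  induction n using Nat.strong_induction_on with
  | _ n ih =>
    intro k
    rcases k with _ | k
    · rw [compArr_zero, Tarr]; simp
    rcases Nat.eq_zero_or_pos n with rfl | hn
    · rw [compArr_eq_zero _ (by omega), Tarr, if_neg (Nat.succ_ne_zero k),
        Finset.Icc_eq_empty (by omega), Finset.sum_empty]
    rw [key]
    have step1 : ∀ j ∈ Finset.Icc 1 n,
        g j * (compArr (invT g) (n - j) k + compArr (invT g) (n - j) (k + 1))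
          = g j * ∑ t ∈ Finset.Icc k (n - 1), (t.choose k : ℤ) * compArr g (n - j) t := by
      intro j hj
      simp only [Finset.mem_Icc] at hj
      rw [ih (n - j) (by omega) k, ih (n - j) (by omega) (k + 1), ← star]
      congr 1
      refine Finset.sum_subset (Finset.Icc_subset_Icc le_rfl (by omega)) ?_
      intro x hx hx2
      simp only [Finset.mem_Icc] at hx hx2
      rw [compArr_eq_zero _ (by omega), mul_zero]
    rw [Finset.sum_congr rfl step1]
    rw [Tarr, if_neg (Nat.succ_ne_zero k)]
    have hre : Finset.Icc (k + 1) n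
        = Finset.map ⟨fun t => t + 1, add_left_injective 1⟩ (Finset.Icc k (n - 1)) := by
      ext x
      simp only [Finset.mem_Icc, Finset.mem_map, Function.Embedding.coeFn_mk]
      constructor
      · intro h; exact ⟨x - 1, ⟨by omega, by omega⟩, by omega⟩
      · rintro ⟨a, ha, rfl⟩; omega
    rw [hre, Finset.sum_map]
    simp only [Function.Embedding.coeFn_mk, Nat.add_sub_cancel]
    rw [show (∑ j ∈ Finset.Icc 1 n, g j * ∑ t ∈ Finset.Icc k (n - 1),
          (t.choose k : ℤ) * compArr g (n - j) t)
        = ∑ j ∈ Finset.Icc 1 n, ∑ t ∈ Finset.Icc k (n - 1),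
          (t.choose k : ℤ) * (g j * compArr g (n - j) t) from
      Finset.sum_congr rfl fun j _ => by
        rw [Finset.mul_sum]; exact Finset.sum_congr rfl fun t _ => by ring]
    rw [Finset.sum_comm]
    refine Finset.sum_congr rfl fun t _ => ?_
    rw [compArr_succ, Finset.mul_sum]

theorem stmt4 (g : ℕ → ℤ) (n k : ℕ) (hk : 1 ≤ k) (hkn : k ≤ n) :
    compArr (invT g) n k =
      ∑ i ∈ Finset.Icc k n, ((i - 1).choose (k - 1) : ℤ) * compArr g n i := by
  rw [main g n k, Tarr, if_neg (by omega)]
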